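/- Let K be a finite set of size k and let x_1, …, x_n be any sequence of elements of K. For t ≥ 0 and x ∈ K let N_t(x) := |{ τ ≤ t : x_τ = x }| be the number of occurrences of x among the first t elements. Then ∑_{t=1}^n 1/√(max(N_{t−1}(x_t), 1)) ≤ 2√(k·n). -/

import Mathlib

open Finset

private lemma step_ineq (j : ℕ) :
    2 * Real.sqrt (j + 1) + 1 / Real.sqrt (j + 2) ≤ 2 * Real.sqrt (j + 2) := by
  set a := Real.sqrt (j + 1) with ha
  set b := Real.sqrt (j + 2) with hb
  have ha0 : 0 ≤ a := Real.sqrt_nonneg _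
  have hb0 : 0 < b := Real.sqrt_pos.2 (by positivity)
  have ha2 : a ^ 2 = (j : ℝ) + 1 := Real.sq_sqrt (by positivity)
  have hb2 : b ^ 2 = (j : ℝ) + 2 := Real.sq_sqrt (by positivity)
  have hab : a ≤ b := Real.sqrt_le_sqrt (by linarith)
  have h : 1 / b ≤ 2 * (b - a) := by
    rw [div_le_iff₀ hb0]
    nlinarith [mul_nonneg (sub_nonneg.2 hab) hb0.le]
  linarith

private lemma sum_range_le (m : ℕ) :
    ∑ i ∈ Finset.range m, 1 / Real.sqrt (max (i : ℝ) 1) ≤ 2 * Real.sqrt m := by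
  have key : ∀ j : ℕ, ∑ i ∈ Finset.range (j + 2), 1 / Real.sqrt (max (i : ℝ) 1)
      ≤ 2 * Real.sqrt (j + 1) := by
    intro j
    induction j with
    | zero =>
      norm_num [Finset.sum_range_succ]
    | succ k ih =>
      rw [Finset.sum_range_succ]
      have hmax : max ((k + 2 : ℕ) : ℝ) 1 = (k : ℝ) + 2 := by
        push_cast; rw [max_eq_left]; linarith
      rw [hmax]
      calc _ ≤ 2 * Real.sqrt (k + 1) + 1 / Real.sqrt ((k:ℝ) + 2) := by
              exact add_le_add_left ih _
        _ ≤ 2 * Real.sqrt ((k:ℝ) + 2) := step_ineq k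
        _ = 2 * Real.sqrt (((k:ℕ) + 1 : ℕ) + 1) := by push_cast; ring_nf
  match m with
  | 0 => simp
  | 1 => norm_num
  | (j + 2) =>
    refine (key j).trans ?_
    have : ((j:ℝ) + 1) ≤ ((j + 2 : ℕ) : ℝ) := by push_cast; linarith
    exact mul_le_mul_of_nonneg_left (Real.sqrt_le_sqrt this) (by norm_num)

theorem sum_inv_sqrt_counts_le {K : Type*} [Fintype K] [DecidableEq K]
    (n : ℕ) (x : Fin n → K) :
    ∑ t : Fin n,
        1 / Real.sqrt (max ((Finset.univ.filter
            (fun τ : Fin n => τ < t ∧ x τ = x t)).card : ℝ) 1)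
      ≤ 2 * Real.sqrt ((Fintype.card K : ℝ) * n) := by
  classical
  set f : ℕ → ℝ := fun i => 1 / Real.sqrt (max (i : ℝ) 1) with hfdef
  have hf0 : ∀ i : ℕ, 0 ≤ f i := fun i => by positivity
  have hsplit := Finset.sum_fiberwise (Finset.univ : Finset (Fin n)) x
    (fun t => f ((Finset.univ.filter (fun τ : Fin n => τ < t ∧ x τ = x t)).card))
  have hgoal : ∑ t : Fin n,
        1 / Real.sqrt (max ((Finset.univ.filter
            (fun τ : Fin n => τ < t ∧ x τ = x t)).card : ℝ) 1)
      = ∑ c : K, ∑ t ∈ Finset.univ.filter (fun t => x t = c),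
          f ((Finset.univ.filter (fun τ : Fin n => τ < t ∧ x τ = x t)).card) := by
    rw [hsplit]
  rw [hgoal]
  -- per-fiber bound
  have hc : ∀ c : K, ∑ t ∈ Finset.univ.filter (fun t => x t = c),
      f ((Finset.univ.filter (fun τ : Fin n => τ < t ∧ x τ = x t)).card)
      ≤ 2 * Real.sqrt ((Finset.univ.filter (fun t => x t = c)).card) := by
    intro c
    set S := Finset.univ.filter (fun t : Fin n => x t = c) with hS
    set e : Fin n → ℕ := fun t => (S.filter (fun τ => τ < t)).card with he
    have hrw : ∀ t ∈ S, f ((Finset.univ.filter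
        (fun τ : Fin n => τ < t ∧ x τ = x t)).card) = f (e t) := by
      intro t ht
      have hxt : x t = c := (Finset.mem_filter.1 ht).2
      have : (Finset.univ.filter (fun τ : Fin n => τ < t ∧ x τ = x t))
          = S.filter (fun τ => τ < t) := by
        rw [hS, Finset.filter_filter]
        ext τ
        simp [hxt, and_comm]
      rw [this]
    have hmono : ∀ t ∈ S, ∀ t' ∈ S, t < t' → e t < e t' := by
      intro t ht t' _ htt'
      apply Finset.card_lt_card
      constructor
      · intro τ hτ
        rw [Finset.mem_filter] at hτ ⊢
        exact ⟨hτ.1, hτ.2.trans htt'⟩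
      · intro hsub
        have h1 : t ∈ S.filter (fun τ => τ < t') := Finset.mem_filter.2 ⟨ht, htt'⟩
        have h2 := hsub h1
        rw [Finset.mem_filter] at h2
        exact absurd h2.2 (lt_irrefl t)
    have hinj : Set.InjOn e ↑S := by
      intro a ha b hb hab
      by_contra hne
      rcases lt_or_gt_of_ne hne with h | h
      · exact absurd hab (Nat.ne_of_lt (hmono a ha b hb h))
      · exact absurd hab.symm (Nat.ne_of_lt (hmono b hb a ha h))
    have hlt : ∀ t ∈ S, e t < S.card := by
      intro t ht
      apply Finset.card_lt_card
      constructor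
      · exact Finset.filter_subset _ _
      · intro hsub
        have h2 := hsub ht
        rw [Finset.mem_filter] at h2
        exact absurd h2.2 (lt_irrefl t)
    calc ∑ t ∈ S, f ((Finset.univ.filter
          (fun τ : Fin n => τ < t ∧ x τ = x t)).card)
        = ∑ t ∈ S, f (e t) := Finset.sum_congr rfl hrw
      _ = ∑ i ∈ S.image e, f i := (Finset.sum_image (fun a ha b hb h => hinj ha hb h)).symm
      _ ≤ ∑ i ∈ Finset.range S.card, f i := by
          apply Finset.sum_le_sum_of_subset_of_nonneg
          · intro i hi
            rw [Finset.mem_image] at hi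
            obtain ⟨t, ht, rfl⟩ := hi
            exact Finset.mem_range.2 (hlt t ht)
          · intro i _ _; exact hf0 i
      _ ≤ 2 * Real.sqrt S.card := sum_range_le _
  -- combine with Cauchy–Schwarz
  have hsum_card : ∑ c : K, ((Finset.univ.filter (fun t => x t = c)).card : ℝ) = n := by
    have := Finset.card_eq_sum_card_fiberwise
      (f := x) (s := (Finset.univ : Finset (Fin n))) (t := (Finset.univ : Finset K))
      (fun t _ => Finset.mem_univ _)
    have h2 : (n : ℝ) = ∑ c : K, ((Finset.univ.filter (fun t => x t = c)).card : ℝ) := by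
      rw [← Nat.cast_sum]
      norm_num [← this]
    linarith [h2]
  have hfin : ∑ c : K, Real.sqrt ((Finset.univ.filter (fun t => x t = c)).card)
      ≤ Real.sqrt ((Fintype.card K : ℝ) * n) := by
    have hcs := sq_sum_le_card_mul_sum_sq
      (s := (Finset.univ : Finset K))
      (f := fun c => Real.sqrt ((Finset.univ.filter (fun t => x t = c)).card))
    have hsq : ∀ c : K, Real.sqrt ((Finset.univ.filter (fun t => x t = c)).card) ^ 2
        = ((Finset.univ.filter (fun t => x t = c)).card : ℝ) :=
      fun c => Real.sq_sqrt (by positivity)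
    have hkn : ((Finset.univ : Finset K).card : ℝ) * ∑ c : K,
        Real.sqrt ((Finset.univ.filter (fun t => x t = c)).card) ^ 2
        = (Fintype.card K : ℝ) * n := by
      rw [Finset.sum_congr rfl (fun c _ => hsq c), hsum_card, Finset.card_univ]
    refine Real.le_sqrt_of_sq_le ?_
    rw [← hkn]
    exact hcs
  calc ∑ c : K, ∑ t ∈ Finset.univ.filter (fun t => x t = c),
        f ((Finset.univ.filter (fun τ : Fin n => τ < t ∧ x τ = x t)).card)
      ≤ ∑ c : K, 2 * Real.sqrt ((Finset.univ.filter (fun t => x t = c)).card) :=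
        Finset.sum_le_sum (fun c _ => hc c)
    _ = 2 * ∑ c : K, Real.sqrt ((Finset.univ.filter (fun t => x t = c)).card) := by
        rw [Finset.mul_sum]
    _ ≤ 2 * Real.sqrt ((Fintype.card K : ℝ) * n) := by linarith
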